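/- Let T be a tree and let G = (T, F) be a T-graph, i.e., a subgraph of the comparability graph of T with vertex set T such that for every t ∈ T the set of neighbors of t below t is cofinal in the set of predecessors of t (and contains the maximum predecessor if one exists). If κ is a regular uncountable cardinal and T has a κ-branch, then K_κ is a minor of G. -/

import Mathlib

universe u

open Cardinal

def Colorable' {V : Type u} (G : SimpleGraph V) (μ : Cardinal.{u}) : Prop :=
  ∃ (β : Type u) (c : V → β), #β ≤ μ ∧ ∀ ⦃x y : V⦄, G.Adj x y → c x ≠ c y

def ChromaticEq {V : Type u} (G : SimpleGraph V) (μ : Cardinal.{u}) : Prop :=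
  Colorable' G μ ∧ ∀ ν : Cardinal.{u}, ν < μ → ¬ Colorable' G ν

def HasCompleteMinor {V : Type u} (G : SimpleGraph V) (κ : Cardinal.{u}) : Prop :=
  ∃ (ι : Type u) (U : ι → Set V), #ι = κ ∧
    (∀ i, (U i).Nonempty) ∧
    (∀ i j, i ≠ j → Disjoint (U i) (U j)) ∧
    (∀ i, (G.induce (U i)).Connected) ∧
    (∀ i j, i ≠ j → ∃ x ∈ U i, ∃ y ∈ U j, G.Adj x y)

def IsSetTree (T : Type u) [PartialOrder T] : Prop :=
  ∀ t : T, IsWellOrder {s : T // s < t} (· < ·)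

def compGraph (T : Type u) [PartialOrder T] : SimpleGraph T :=
  SimpleGraph.fromRel (· ≤ ·)

def IsSpecialTree (T : Type u) [PartialOrder T] (κ : Cardinal.{u}) : Prop :=
  ∃ (β : Type u) (f : T → β), #β ≤ κ ∧ ∀ ⦃s t : T⦄, s < t → f s ≠ f t

def HasChainOfSize (T : Type u) [PartialOrder T] (κ : Cardinal.{u}) : Prop :=
  ∃ C : Set T, IsChain (· ≤ ·) C ∧ #C = κ

def HasAntichainOfSize (T : Type u) [PartialOrder T] (κ : Cardinal.{u}) : Prop :=
  ∃ A : Set T, IsAntichain (· ≤ ·) A ∧ #A = κ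

def HasIndepOfSize {V : Type u} (G : SimpleGraph V) (κ : Cardinal.{u}) : Prop :=
  ∃ S : Set V, #S = κ ∧ ∀ x ∈ S, ∀ y ∈ S, ¬ G.Adj x y

def AllChainsCountable (T : Type u) [PartialOrder T] : Prop :=
  ∀ C : Set T, IsChain (· ≤ ·) C → #C ≤ ℵ₀

noncomputable def nodeHeight {T : Type u} [PartialOrder T] (hT : IsSetTree T) (t : T) : Ordinal.{u} :=
  @Ordinal.type {s : T // s < t} (· < ·) (hT t)

def KappaLambdaConnected {V : Type u} (G : SimpleGraph V) (κ μ : Cardinal.{u}) : Prop :=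
  ∀ S : Set V, #S < κ → (Sᶜ : Set V).Nonempty ∧ #((G.induce (Sᶜ : Set V)).ConnectedComponent) < μ

def KappaConnected {V : Type u} (G : SimpleGraph V) (κ : Cardinal.{u}) : Prop :=
  κ ≤ #V ∧ ∀ S : Set V, #S < κ → (G.induce (Sᶜ : Set V)).Connected

def ContainsSubdivisionOfComplete {V : Type u} (G : SimpleGraph V) (κ : Cardinal.{u}) : Prop :=
  ∃ (ι : Type u) (v : ι → V), #ι = κ ∧ Function.Injective v ∧
    ∃ p : ∀ i j : ι, G.Walk (v i) (v j),
      (∀ i j, i ≠ j → (p i j).IsPath) ∧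
      (∀ i j k l, i ≠ j → k ≠ l → (i, j) ≠ (k, l) → (i, j) ≠ (l, k) →
        ∀ x, x ∈ (p i j).support → x ∈ (p k l).support → x ∈ Set.range v) ∧
      (∀ i j k, i ≠ j → v k ∈ (p i j).support → k = i ∨ k = j)

def IsTGraph {T : Type u} [PartialOrder T] (G : SimpleGraph T) : Prop :=
  (∀ ⦃s t⦄, G.Adj s t → s < t ∨ t < s) ∧
  (∀ t s : T, s < t → ∃ r, s ≤ r ∧ r < t ∧ G.Adj r t)

section Stmt14Aux
open scoped Classical

variable {T : Type u} [PartialOrder T]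

lemma stmt14_ord_lt_add_one (x : Ordinal.{u}) : x < x + 1 := by
  rw [Ordinal.add_one_eq_succ]; exact Order.lt_succ x

lemma setTree_wf (hT : IsSetTree T) : WellFounded ((· < ·) : T → T → Prop) := by
  constructor
  intro t
  have key : ∀ (c : T) (p : {s : T // s < c}), Acc (· < ·) (p : T) := by
    intro c
    haveI := hT c
    have wf : WellFounded ((· < ·) : {s : T // s < c} → {s : T // s < c} → Prop) :=
      IsWellFounded.wf
    intro p
    refine wf.induction (C := fun p => Acc (· < ·) (p : T)) p ?_
    rintro ⟨x, hx⟩ IH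
    constructor
    intro y hy
    exact IH ⟨y, lt_trans hy hx⟩ (Subtype.mk_lt_mk.mpr hy)
  constructor
  intro y hy
  exact key t ⟨y, hy⟩

lemma setTree_cmp (hT : IsSetTree T) {x y c : T} (hx : x ≤ c) (hy : y ≤ c) :
    x ≤ y ∨ y ≤ x := by
  rcases hx.eq_or_lt with rfl | hx'
  · exact Or.inr hy
  · rcases hy.eq_or_lt with rfl | hy'
    · exact Or.inl hx'.le
    · haveI := hT c
      rcases @trichotomous {s : T // s < c} (· < ·) _ ⟨x, hx'⟩ ⟨y, hy'⟩ with h | h | h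
      · exact Or.inl (le_of_lt (Subtype.mk_lt_mk.mp h))
      · exact Or.inl (le_of_eq (congrArg Subtype.val h))
      · exact Or.inr (le_of_lt (Subtype.mk_lt_mk.mp h))

lemma tgraph_reach (hT : IsSetTree T) {G : SimpleGraph T} (hG : IsTGraph G) (U : Set T) :
    ∀ (x : T) (hx : x ∈ U) (a : T) (ha : a ∈ U), a ≤ x → Set.Icc a x ⊆ U →
      (G.induce U).Reachable ⟨a, ha⟩ ⟨x, hx⟩ := by
  intro x
  refine (setTree_wf hT).induction
    (C := fun x => ∀ (hx : x ∈ U) (a : T) (ha : a ∈ U), a ≤ x → Set.Icc a x ⊆ U →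
      (G.induce U).Reachable ⟨a, ha⟩ ⟨x, hx⟩) x ?_
  intro x IH hx a ha hax hIcc
  rcases hax.eq_or_lt with rfl | hlt
  · exact SimpleGraph.Reachable.refl _
  · obtain ⟨r, har, hrx, hadj⟩ := hG.2 x a hlt
    have hrU : r ∈ U := hIcc ⟨har, hrx.le⟩
    have h1 := IH r hrx hrU a ha har (fun w hw => hIcc ⟨hw.1, hw.2.trans hrx.le⟩)
    have h2 : (G.induce U).Adj ⟨r, hrU⟩ ⟨x, hx⟩ := hadj
    exact h1.trans h2.reachable

noncomputable def eF (hT : IsSetTree T) (D : Set T) (t₀ : T) : Ordinal.{u} → T :=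
  WellFounded.fix Ordinal.lt_wf fun o rec =>
    if h : ∃ v, v ∈ D ∧ ∀ o' (ho' : o' < o), rec o' ho' < v then
      (setTree_wf hT).min {v | v ∈ D ∧ ∀ o' (ho' : o' < o), rec o' ho' < v}
        ⟨h.choose, h.choose_spec⟩
    else t₀

lemma eF_def (hT : IsSetTree T) (D : Set T) (t₀ : T) (o : Ordinal.{u}) :
    eF hT D t₀ o =
      if h : ∃ v, v ∈ D ∧ ∀ o' (_ : o' < o), eF hT D t₀ o' < v then
        (setTree_wf hT).min {v | v ∈ D ∧ ∀ o' (_ : o' < o), eF hT D t₀ o' < v}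
          ⟨h.choose, h.choose_spec⟩
      else t₀ :=
  WellFounded.fix_eq _ _ _

lemma eF_spec (hT : IsSetTree T) {κ : Cardinal.{u}} (D : Set T)
    (hDcmp : ∀ x ∈ D, ∀ y ∈ D, x ≤ y ∨ y ≤ x)
    (hDcard : κ ≤ #D) (t₀ : T) :
    ∀ o : Ordinal.{u}, o < κ.ord →
      eF hT D t₀ o ∈ D ∧ ∀ o' < o, eF hT D t₀ o' < eF hT D t₀ o := by
  intro o
  induction o using Ordinal.induction with
  | h o IH =>
  intro ho
  have hproper : ¬ (D ⊆ eF hT D t₀ '' Set.Iio o) := by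
    intro hsub
    have hch : ∀ v : D, ∃ x : Set.Iio o, eF hT D t₀ x = (v : T) := by
      intro v
      obtain ⟨x, hx1, hx2⟩ := hsub v.2
      exact ⟨⟨x, hx1⟩, hx2⟩
    have hg : Function.Injective (fun v : D => Ordinal.ToType.mk ((hch v).choose)) := by
      intro v w hvw
      have h1 : (hch v).choose = (hch w).choose := (Ordinal.ToType.mk (o := o)).injective hvw
      exact Subtype.ext (((hch v).choose_spec).symm.trans (h1 ▸ (hch w).choose_spec))
    have h1 : #D ≤ #o.ToType := Cardinal.mk_le_of_injective hg
    rw [Cardinal.mk_toType] at h1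
    exact absurd (lt_of_le_of_lt (hDcard.trans h1) (Cardinal.lt_ord.mp ho)) (lt_irrefl _)
  obtain ⟨v, hvD, hvIm⟩ := Set.not_subset.mp hproper
  have hup : ∀ o', o' < o → eF hT D t₀ o' < v := by
    intro o'
    induction o' using Ordinal.induction with
    | h o' IH2 =>
    intro ho'
    have hD' : eF hT D t₀ o' ∈ D := (IH o' ho' (ho'.trans ho)).1
    by_contra hnlt
    have hvle : v ≤ eF hT D t₀ o' := by
      rcases hDcmp _ hD' _ hvD with h | h
      · rcases h.eq_or_lt with h | h
        · exact h.ge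
        · exact absurd h hnlt
      · exact h
    rcases hvle.eq_or_lt with heq | hlt
    · exact hvIm ⟨o', ho', heq.symm⟩
    · have hSne : ∃ w, w ∈ D ∧ ∀ o'' (_ : o'' < o'), eF hT D t₀ o'' < w :=
        ⟨eF hT D t₀ o', hD', fun o'' h'' => (IH o' ho' (ho'.trans ho)).2 o'' h''⟩
      rw [eF_def hT D t₀ o', dif_pos hSne] at hlt
      have hvS : v ∉ {w | w ∈ D ∧ ∀ o'' (_ : o'' < o'), eF hT D t₀ o'' < w} :=
        fun hw => (setTree_wf hT).not_lt_min _ hw hlt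
      have hex : ∃ o'', o'' < o' ∧ ¬ (eF hT D t₀ o'' < v) := by
        by_contra hall
        push_neg at hall
        exact hvS ⟨hvD, fun o'' h'' => hall o'' h''⟩
      obtain ⟨o'', ho'', hnlt''⟩ := hex
      exact hnlt'' (IH2 o'' ho'' (ho''.trans ho'))
  have hSne : ∃ w, w ∈ D ∧ ∀ o' (_ : o' < o), eF hT D t₀ o' < w := ⟨v, hvD, hup⟩
  have hmem : eF hT D t₀ o ∈ {w | w ∈ D ∧ ∀ o' (_ : o' < o), eF hT D t₀ o' < w} := by
    rw [eF_def hT D t₀ o, dif_pos hSne]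
    exact (setTree_wf hT).min_mem _ _
  exact ⟨hmem.1, hmem.2⟩

lemma eF_min (hT : IsSetTree T) {κ : Cardinal.{u}} (D : Set T)
    (hDcmp : ∀ x ∈ D, ∀ y ∈ D, x ≤ y ∨ y ≤ x)
    (hDcard : κ ≤ #D) (t₀ : T) :
    ∀ o : Ordinal.{u}, o < κ.ord → ∀ v ∈ D, (∀ o' < o, eF hT D t₀ o' < v) →
      eF hT D t₀ o ≤ v := by
  intro o ho v hvD hv
  have hSne : ∃ w, w ∈ D ∧ ∀ o' (_ : o' < o), eF hT D t₀ o' < w := ⟨v, hvD, hv⟩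
  have hmem : eF hT D t₀ o ∈ D := (eF_spec hT D hDcmp hDcard t₀ o ho).1
  have hnlt : ¬ v < eF hT D t₀ o := by
    rw [eF_def hT D t₀ o, dif_pos hSne]
    exact (setTree_wf hT).not_lt_min {w | w ∈ D ∧ ∀ o' (_ : o' < o), eF hT D t₀ o' < w} ⟨hvD, hv⟩
  rcases hDcmp _ hmem _ hvD with h | h
  · exact h
  · rcases h.eq_or_lt with h | h
    · exact h.ge
    · exact absurd h hnlt

lemma gapLemma (hT : IsSetTree T) {κ : Cardinal.{u}} (D : Set T)
    (hDcmp : ∀ x ∈ D, ∀ y ∈ D, x ≤ y ∨ y ≤ x)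
    (e : Ordinal.{u} → T)
    (heD : ∀ o, o < κ.ord → e o ∈ D)
    (hmono : ∀ o o', o < o' → o' < κ.ord → e o < e o')
    (hmin : ∀ o, o < κ.ord → ∀ v ∈ D, (∀ o' < o, e o' < v) → e o ≤ v)
    {v : T} {q μ : Ordinal.{u}} (hv : v ∈ D) (hq : q < κ.ord) (hμ : μ < κ.ord)
    (h1 : e q ≤ v) (h2 : v < e μ) :
    ∃ σ, q ≤ σ ∧ σ < μ ∧ e σ ≤ v ∧ v < e (σ + 1) := by
  classical
  have hmonole : ∀ o o', o ≤ o' → o' < κ.ord → e o ≤ e o' := by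
    intro o o' h h'
    rcases h.eq_or_lt with rfl | hlt
    · exact le_rfl
    · exact (hmono _ _ hlt h').le
  have hZne : ({o : Ordinal.{u} | v < e o ∧ o ≤ μ}).Nonempty := ⟨μ, h2, le_rfl⟩
  set σ' := Ordinal.lt_wf.min {o : Ordinal.{u} | v < e o ∧ o ≤ μ} hZne with hσ'def
  have hσ'Z : v < e σ' ∧ σ' ≤ μ := Ordinal.lt_wf.min_mem _ hZne
  have hminZ : ∀ o, (v < e o ∧ o ≤ μ) → ¬ o < σ' := fun o ho =>
    Ordinal.lt_wf.not_lt_min _ ho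
  have hσ'Λ : σ' < κ.ord := lt_of_le_of_lt hσ'Z.2 hμ
  have hqσ' : q < σ' := by
    by_contra hle
    push_neg at hle
    exact absurd (le_trans (hmonole _ _ hle hq) h1) (not_le_of_gt hσ'Z.1)
  rcases Ordinal.zero_or_succ_or_isSuccLimit σ' with h0 | ⟨a, ha⟩ | hlim
  · exact absurd (h0 ▸ hqσ') (zero_le (a := q)).not_gt
  · have haσ' : a < σ' := by rw [← ha]; exact Order.lt_succ a
    have haΛ : a < κ.ord := lt_trans haσ' hσ'Λ
    refine ⟨a, ?_, lt_of_lt_of_le haσ' hσ'Z.2, ?_, ?_⟩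
    · have h := hqσ'
      rw [← ha] at h
      exact Order.lt_succ_iff.mp h
    · have hnlt : ¬ v < e a := fun hvlt =>
        hminZ a ⟨hvlt, le_of_lt (lt_of_lt_of_le haσ' hσ'Z.2)⟩ haσ'
      rcases hDcmp _ (heD a haΛ) _ hv with h | h
      · exact h
      · rcases h.eq_or_lt with h | h
        · exact h.ge
        · exact absurd h hnlt
    · rw [Ordinal.add_one_eq_succ, ha]
      exact hσ'Z.1
  · exfalso
    refine not_le_of_gt hσ'Z.1 (hmin σ' hσ'Λ v hv ?_)
    intro o' ho'
    by_contra hno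
    have ho'Λ : o' < κ.ord := ho'.trans hσ'Λ
    have hvle : v ≤ e o' := by
      rcases hDcmp _ (heD o' ho'Λ) _ hv with h | h
      · rcases h.eq_or_lt with h | h
        · exact h.ge
        · exact absurd h hno
      · exact h
    have hsucclt : o' + 1 < σ' := by
      rw [Ordinal.add_one_eq_succ]
      exact hlim.succ_lt ho'
    have hv1 : v < e (o' + 1) :=
      lt_of_le_of_lt hvle (hmono _ _ (stmt14_ord_lt_add_one o') (hsucclt.trans hσ'Λ))
    exact hminZ (o' + 1) ⟨hv1, le_of_lt (lt_of_lt_of_le hsucclt hσ'Z.2)⟩ hsucclt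

lemma pdLemma (hT : IsSetTree T) {G : SimpleGraph T} (hG : IsTGraph G) {κ : Cardinal.{u}}
    (hreg : κ.IsRegular) (hunc : ℵ₀ < κ) (D : Set T)
    (hDcmp : ∀ x ∈ D, ∀ y ∈ D, x ≤ y ∨ y ≤ x)
    (hDdc : ∀ x y : T, x ≤ y → y ∈ D → x ∈ D)
    (e : Ordinal.{u} → T)
    (heD : ∀ o, o < κ.ord → e o ∈ D)
    (hmono : ∀ o o', o < o' → o' < κ.ord → e o < e o')
    (hmin : ∀ o, o < κ.ord → ∀ v ∈ D, (∀ o' < o, e o' < v) → e o ≤ v) :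
    ∀ q, q < κ.ord → ∃ ρ, q ≤ ρ ∧ ρ < κ.ord ∧ ∀ o₀, o₀ < κ.ord →
      ∃ μ, μ < κ.ord ∧ o₀ < μ ∧ ρ < μ ∧
        ∃ x, (x ∈ D ∧ e ρ ≤ x ∧ x < e (ρ + 1)) ∧
          ∃ y, (y ∈ D ∧ e μ ≤ y ∧ y < e (μ + 1)) ∧ G.Adj x y := by
  intro q hq
  have hΛlim : Order.IsSuccLimit κ.ord := Cardinal.isSuccLimit_ord hunc.le
  by_contra hcon
  push_neg at hcon
  obtain ⟨h, hh1, hh2⟩ : ∃ h : Ordinal.{u} → Ordinal.{u}, (∀ ρ, h ρ < κ.ord) ∧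
      ∀ ρ, q ≤ ρ → ρ < κ.ord → ∀ μ, μ < κ.ord → h ρ < μ → ρ < μ →
        ∀ x, (x ∈ D ∧ e ρ ≤ x ∧ x < e (ρ + 1)) →
          ∀ y, (y ∈ D ∧ e μ ≤ y ∧ y < e (μ + 1)) → ¬ G.Adj x y := by
    refine ⟨fun ρ => if hρ : q ≤ ρ ∧ ρ < κ.ord then (hcon ρ hρ.1 hρ.2).choose else 0, ?_, ?_⟩
    · intro ρ
      by_cases hρ : q ≤ ρ ∧ ρ < κ.ord
      · simp only [dif_pos hρ]
        exact (hcon ρ hρ.1 hρ.2).choose_spec.1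
      · simp only [dif_neg hρ]
        exact hΛlim.pos
    · intro ρ hρ1 hρ2 μ hμ hlt hρμ
      have hρ : q ≤ ρ ∧ ρ < κ.ord := ⟨hρ1, hρ2⟩
      simp only [dif_pos hρ] at hlt
      exact (hcon ρ hρ1 hρ2).choose_spec.2 μ hμ hlt hρμ
  set f : ℕ → Ordinal.{u} :=
    fun n => Nat.rec (q + 1) (fun _ x => max (x + 1) (Ordinal.blsub x (fun ρ _ => h ρ))) n
    with hfdef
  have hf0 : f 0 = q + 1 := rfl
  have hfs : ∀ n, f (n + 1) = max (f n + 1) (Ordinal.blsub (f n) (fun ρ _ => h ρ)) :=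
    fun n => rfl
  have hfΛ : ∀ n, f n < κ.ord := by
    intro n
    induction n with
    | zero =>
      rw [hf0, Ordinal.add_one_eq_succ]
      exact hΛlim.succ_lt hq
    | succ n IHn =>
      rw [hfs]
      apply max_lt
      · rw [Ordinal.add_one_eq_succ]
        exact hΛlim.succ_lt IHn
      · refine Ordinal.blsub_lt_ord ?_ (fun i _ => hh1 i)
        rw [hreg.cof_eq]
        exact Cardinal.lt_ord.mp IHn
  have hfmono : ∀ n, f n < f (n + 1) := fun n =>
    lt_of_lt_of_le (stmt14_ord_lt_add_one (f n)) (by rw [hfs]; exact le_max_left _ _)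
  have hμΛ : iSup f < κ.ord := by
    refine Ordinal.iSup_lt_ord_lift ?_ hfΛ
    rw [hreg.cof_eq]
    simpa using hunc
  have hqμ : q < iSup f :=
    lt_of_lt_of_le (stmt14_ord_lt_add_one q) (hf0 ▸ Ordinal.le_iSup f 0)
  have hlt : e q < e (iSup f) := hmono _ _ hqμ hμΛ
  obtain ⟨r, hqr, hrμ, hadj⟩ := hG.2 (e (iSup f)) (e q) hlt
  have hrD : r ∈ D := hDdc _ _ hrμ.le (heD _ hμΛ)
  obtain ⟨σ, hqσ, hσμ, hσ1, hσ2⟩ :=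
    gapLemma hT D hDcmp e heD hmono hmin hrD hq hμΛ hqr hrμ
  have hσΛ : σ < κ.ord := hσμ.trans hμΛ
  have hsupsucc : iSup f + 1 < κ.ord := by
    rw [Ordinal.add_one_eq_succ]
    exact hΛlim.succ_lt hμΛ
  obtain ⟨n, hn⟩ := Ordinal.lt_iSup_iff.mp hσμ
  have hhσ : h σ < iSup f := by
    have hb : h σ < Ordinal.blsub (f n) (fun ρ _ => h ρ) := Ordinal.lt_blsub _ σ hn
    have hb2 : (Ordinal.blsub (f n) fun ρ _ => h ρ) ≤ f (n + 1) := by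
      rw [hfs]
      exact le_max_right _ _
    exact lt_of_lt_of_le hb (hb2.trans (Ordinal.le_iSup f (n + 1)))
  exact hh2 σ hqσ hσΛ (iSup f) hμΛ hhσ hσμ r ⟨hrD, hσ1, hσ2⟩
    (e (iSup f)) ⟨heD _ hμΛ, le_rfl, hmono _ _ (stmt14_ord_lt_add_one _) hsupsucc⟩ hadj

noncomputable def mRec (F : Ordinal.{u} → Ordinal.{u} → Ordinal.{u}) :
    Ordinal.{u} → Ordinal.{u} :=
  WellFounded.fix Ordinal.lt_wf fun α rec =>
    Ordinal.bsup (α + 1) fun β hβ =>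
      F (Ordinal.blsub β fun γ hγ =>
          rec γ (hγ.trans_le (by
            rw [Ordinal.add_one_eq_succ] at hβ
            exact Order.lt_succ_iff.mp hβ)))
        (Ordinal.blsub α fun γ hγ => rec γ hγ)

lemma mRec_def (F : Ordinal.{u} → Ordinal.{u} → Ordinal.{u}) (α : Ordinal.{u}) :
    mRec F α = Ordinal.bsup (α + 1) fun β _ =>
      F (Ordinal.blsub β fun γ _ => mRec F γ)
        (Ordinal.blsub α fun γ _ => mRec F γ) :=
  WellFounded.fix_eq _ _ _

end Stmt14Aux

/-- if G is a T-graph, κ is regular uncountable and T has a κ-branch,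
then K_κ is a minor of G. -/
theorem stmt14 (κ : Cardinal.{u}) (hreg : κ.IsRegular) (hunc : ℵ₀ < κ)
    (T : Type u) [PartialOrder T] (hT : IsSetTree T)
    (G : SimpleGraph T) (hG : IsTGraph G)
    (hb : HasChainOfSize T κ) :
    HasCompleteMinor G κ := by
  classical
  obtain ⟨C, hC, hCcard⟩ := hb
  have hΛlim : Order.IsSuccLimit κ.ord := Cardinal.isSuccLimit_ord hunc.le
  have hsuccΛ : ∀ {x : Ordinal.{u}}, x < κ.ord → x + 1 < κ.ord := by
    intro x hx
    rw [Ordinal.add_one_eq_succ]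
    exact hΛlim.succ_lt hx
  have hCD : C ⊆ {s : T | ∃ c ∈ C, s ≤ c} := fun c hc => ⟨c, hc, le_rfl⟩
  set D : Set T := {s : T | ∃ c ∈ C, s ≤ c} with hDdef
  have hDdc : ∀ x y : T, x ≤ y → y ∈ D → x ∈ D := by
    rintro x y hxy ⟨c, hc, hyc⟩
    exact ⟨c, hc, hxy.trans hyc⟩
  have hDcmp : ∀ x ∈ D, ∀ y ∈ D, x ≤ y ∨ y ≤ x := by
    rintro x ⟨c, hc, hxc⟩ y ⟨c', hc', hyc'⟩
    rcases eq_or_ne c c' with rfl | hne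
    · exact setTree_cmp hT hxc hyc'
    · rcases hC hc hc' hne with h | h
      · exact setTree_cmp hT (hxc.trans h) hyc'
      · exact setTree_cmp hT hxc (hyc'.trans h)
  have hDcard : κ ≤ #D := by
    rw [← hCcard]
    exact Cardinal.mk_le_mk_of_subset hCD
  have hCne : Nonempty C := by
    rw [← Cardinal.mk_ne_zero_iff, hCcard]
    exact (aleph0_pos.trans hunc).ne'
  obtain ⟨⟨t₀, ht₀⟩⟩ := hCne
  have espec := eF_spec hT D hDcmp hDcard t₀
  have hminE := eF_min hT D hDcmp hDcard t₀
  obtain ⟨e, heq⟩ : ∃ e : Ordinal.{u} → T, e = eF hT D t₀ := ⟨_, rfl⟩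
  rw [← heq] at espec hminE
  have heD : ∀ o, o < κ.ord → e o ∈ D := fun o ho => (espec o ho).1
  have hmono : ∀ o o', o < o' → o' < κ.ord → e o < e o' := fun o o' h h' =>
    (espec o' h').2 o h
  have hmonole : ∀ o o', o ≤ o' → o' < κ.ord → e o ≤ e o' := by
    intro o o' h h'
    rcases h.eq_or_lt with rfl | hlt
    · exact le_rfl
    · exact (hmono _ _ hlt h').le
  have PD := pdLemma hT hG hreg hunc D hDcmp hDdc e heD hmono hminE
  obtain ⟨Pρ, hPρ⟩ : ∃ g : Ordinal.{u} → Ordinal.{u}, ∀ q, q < κ.ord →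
      q ≤ g q ∧ g q < κ.ord ∧ ∀ o₀, o₀ < κ.ord → ∃ μ, μ < κ.ord ∧ o₀ < μ ∧ g q < μ ∧
        ∃ x, (x ∈ D ∧ e (g q) ≤ x ∧ x < e (g q + 1)) ∧
          ∃ y, (y ∈ D ∧ e μ ≤ y ∧ y < e (μ + 1)) ∧ G.Adj x y := by
    refine ⟨fun q => if h : q < κ.ord then (PD q h).choose else 0, fun q hq => ?_⟩
    simp only [dif_pos hq]
    exact (PD q hq).choose_spec
  obtain ⟨Pw, hPw⟩ : ∃ g : Ordinal.{u} → Ordinal.{u} → Ordinal.{u}, ∀ q, q < κ.ord →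
      ∀ o₀, o₀ < κ.ord → g q o₀ < κ.ord ∧ o₀ < g q o₀ ∧ Pρ q < g q o₀ ∧
        ∃ x, (x ∈ D ∧ e (Pρ q) ≤ x ∧ x < e (Pρ q + 1)) ∧
          ∃ y, (y ∈ D ∧ e (g q o₀) ≤ y ∧ y < e (g q o₀ + 1)) ∧ G.Adj x y := by
    refine ⟨fun q o₀ => if h : q < κ.ord ∧ o₀ < κ.ord
      then ((hPρ q h.1).2.2 o₀ h.2).choose else 0, fun q hq o₀ ho₀ => ?_⟩
    have h : q < κ.ord ∧ o₀ < κ.ord := ⟨hq, ho₀⟩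
    simp only [dif_pos h]
    exact ((hPρ q hq).2.2 o₀ ho₀).choose_spec
  obtain ⟨m, q, hqdef, mdef⟩ : ∃ (m : Ordinal.{u} → Ordinal.{u})
      (q : Ordinal.{u} → Ordinal.{u}),
      (∀ α, q α = Ordinal.blsub α (fun γ _ => m γ)) ∧
      (∀ α, m α = Ordinal.bsup (α + 1) (fun β _ => Pw (q β) (Pρ (q α)))) :=
    ⟨mRec (fun a b => Pw a (Pρ b)),
      fun α => Ordinal.blsub α (fun γ _ => mRec (fun a b => Pw a (Pρ b)) γ),
      fun _ => rfl, fun α => mRec_def (fun a b => Pw a (Pρ b)) α⟩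
  have hmΛ : ∀ α, α < κ.ord → m α < κ.ord := by
    intro α
    induction α using Ordinal.induction with
    | h α IH =>
    intro hα
    have hqsub : ∀ β, β ≤ α → q β < κ.ord := by
      intro β hβ
      rw [hqdef]
      refine Ordinal.blsub_lt_ord ?_ ?_
      · rw [hreg.cof_eq]
        exact Cardinal.lt_ord.mp (lt_of_le_of_lt hβ hα)
      · exact fun γ hγ => IH γ (lt_of_lt_of_le hγ hβ) ((lt_of_lt_of_le hγ hβ).trans hα)
    rw [mdef]
    refine Ordinal.bsup_lt_ord ?_ ?_
    · rw [hreg.cof_eq]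
      exact Cardinal.lt_ord.mp (hsuccΛ hα)
    · intro β hβ
      have hβα : β ≤ α := by
        rw [Ordinal.add_one_eq_succ] at hβ
        exact Order.lt_succ_iff.mp hβ
      exact (hPw (q β) (hqsub β hβα) (Pρ (q α)) ((hPρ (q α) (hqsub α le_rfl)).2.1)).1
  have hqΛ : ∀ α, α < κ.ord → q α < κ.ord := by
    intro α hα
    rw [hqdef]
    refine Ordinal.blsub_lt_ord ?_ ?_
    · rw [hreg.cof_eq]
      exact Cardinal.lt_ord.mp hα
    · exact fun γ hγ => hmΛ γ (hγ.trans hα)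
  have hρΛ : ∀ α, α < κ.ord → Pρ (q α) < κ.ord := fun α hα => (hPρ _ (hqΛ α hα)).2.1
  have hρm : ∀ α, α < κ.ord → Pρ (q α) < m α := by
    intro α hα
    have h1 : Pρ (q α) < Pw (q α) (Pρ (q α)) := (hPw _ (hqΛ α hα) _ (hρΛ α hα)).2.2.1
    have h2 : Pw (q α) (Pρ (q α)) ≤ m α := by
      rw [mdef]
      exact Ordinal.le_bsup _ α (stmt14_ord_lt_add_one α)
    exact h1.trans_le h2
  have hmΛ1 : ∀ α, α < κ.ord → m α + 1 < κ.ord := fun α hα => hsuccΛ (hmΛ α hα)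
  set A : Ordinal.{u} → Set T :=
    fun α => {v : T | v ∈ D ∧ e (Pρ (q α)) ≤ v ∧ v < e (m α + 1)} with hAdef
  have hAroot : ∀ α, α < κ.ord → e (Pρ (q α)) ∈ A α := by
    intro α hα
    exact ⟨heD _ (hρΛ α hα), le_rfl,
      hmono _ _ ((hρm α hα).trans (stmt14_ord_lt_add_one (m α))) (hmΛ1 α hα)⟩
  have hconn : ∀ α, α < κ.ord → (G.induce (A α)).Connected := by
    intro α hα
    rw [SimpleGraph.connected_iff_exists_forall_reachable]
    refine ⟨⟨e (Pρ (q α)), hAroot α hα⟩, ?_⟩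
    rintro ⟨w, hw⟩
    refine tgraph_reach hT hG (A α) w hw _ (hAroot α hα) hw.2.1 ?_
    intro z hz
    exact ⟨hDdc _ _ hz.2 hw.1, hz.1, lt_of_le_of_lt hz.2 hw.2.2⟩
  have hdisj : ∀ β α, β < α → α < κ.ord → ∀ v, v ∈ A β → v ∉ A α := by
    intro β α hβα hα v hvβ hvα
    have h1 : m β < q α := by
      rw [hqdef]
      exact Ordinal.lt_blsub (fun γ _ => m γ) β hβα
    have h2 : m β + 1 ≤ Pρ (q α) := by
      rw [Ordinal.add_one_eq_succ]
      exact Order.succ_le_of_lt (h1.trans_le (hPρ _ (hqΛ α hα)).1)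
    have h3 : e (m β + 1) ≤ e (Pρ (q α)) := hmonole _ _ h2 (hρΛ α hα)
    exact absurd hvα.2.1 (not_le_of_gt (lt_of_lt_of_le hvβ.2.2 h3))
  have hedge : ∀ β α, β < α → α < κ.ord → ∃ x ∈ A β, ∃ y ∈ A α, G.Adj x y := by
    intro β α hβα hα
    have hβ : β < κ.ord := hβα.trans hα
    obtain ⟨x, hx, y, hy, hadj⟩ := (hPw (q β) (hqΛ β hβ) (Pρ (q α)) (hρΛ α hα)).2.2.2
    have hwΛ : Pw (q β) (Pρ (q α)) < κ.ord :=
      (hPw (q β) (hqΛ β hβ) (Pρ (q α)) (hρΛ α hα)).1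
    have hρw : Pρ (q α) < Pw (q β) (Pρ (q α)) :=
      (hPw (q β) (hqΛ β hβ) (Pρ (q α)) (hρΛ α hα)).2.1
    have hwle : Pw (q β) (Pρ (q α)) ≤ m α := by
      rw [mdef]
      exact Ordinal.le_bsup _ β (hβα.trans (stmt14_ord_lt_add_one α))
    refine ⟨x, ?_, y, ?_, hadj⟩
    · refine ⟨hx.1, hx.2.1, lt_of_lt_of_le hx.2.2 ?_⟩
      have hsle : Pρ (q β) + 1 ≤ m β + 1 := by
        rw [Ordinal.add_one_eq_succ, Ordinal.add_one_eq_succ]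
        exact Order.succ_le_succ (hρm β hβ).le
      exact hmonole _ _ hsle (hmΛ1 β hβ)
    · refine ⟨hy.1, le_trans (hmonole _ _ hρw.le hwΛ) hy.2.1, lt_of_lt_of_le hy.2.2 ?_⟩
      have hsle : Pw (q β) (Pρ (q α)) + 1 ≤ m α + 1 := by
        rw [Ordinal.add_one_eq_succ, Ordinal.add_one_eq_succ]
        exact Order.succ_le_succ hwle
      exact hmonole _ _ hsle (hmΛ1 α hα)
  have hlt' : ∀ i : (κ.ord).ToType,
      (((Ordinal.ToType.mk (o := κ.ord)).symm i : Set.Iio κ.ord) : Ordinal.{u}) < κ.ord :=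
    fun i => ((Ordinal.ToType.mk (o := κ.ord)).symm i).2
  have hinj : ∀ i j : (κ.ord).ToType, i ≠ j →
      (((Ordinal.ToType.mk (o := κ.ord)).symm i : Set.Iio κ.ord) : Ordinal.{u}) ≠
      (((Ordinal.ToType.mk (o := κ.ord)).symm j : Set.Iio κ.ord) : Ordinal.{u}) := by
    intro i j hij h
    exact hij ((Ordinal.ToType.mk (o := κ.ord)).symm.injective (Subtype.ext h))
  refine ⟨(κ.ord).ToType,
    fun i => A (((Ordinal.ToType.mk (o := κ.ord)).symm i : Set.Iio κ.ord) : Ordinal.{u}),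
    ?_, ?_, ?_, ?_, ?_⟩
  · rw [Cardinal.mk_toType, Cardinal.card_ord]
  · exact fun i => ⟨_, hAroot _ (hlt' i)⟩
  · intro i j hij
    rcases (hinj i j hij).lt_or_gt with h | h
    · rw [Set.disjoint_left]
      exact fun {a} ha ha' => hdisj _ _ h (hlt' j) a ha ha'
    · rw [Set.disjoint_right]
      exact fun {a} ha ha' => hdisj _ _ h (hlt' i) a ha ha'
  · exact fun i => hconn _ (hlt' i)
  · intro i j hij
    rcases (hinj i j hij).lt_or_gt with h | h
    · obtain ⟨x, hx, y, hy, hadj⟩ := hedge _ _ h (hlt' j)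
      exact ⟨x, hx, y, hy, hadj⟩
    · obtain ⟨x, hx, y, hy, hadj⟩ := hedge _ _ h (hlt' i)
      exact ⟨y, hy, x, hx, hadj.symm⟩
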